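/- arXiv:1010.2361 — 4 statements merged into one kernel-verified Lean document; each statement's English description precedes it below -/
import Mathlib

section
/- Let d ≥ 1 and let ψ₁, …, ψ_{d²} be d² unit vectors in ℂ^d forming a SIC POVM, i.e., |⟨ψ_j, ψ_k⟩|² = 1/(d+1) for all j ≠ k. Then for every unit vector φ ∈ ℂ^d one has ∏_{j=1}^{d²} |⟨φ, ψ_j⟩|² ≤ (d+1)^{−(d²−1)}, with equality if and only if φ = c·ψ_j for some index j and some complex number c of modulus 1. In particular, up to global phases the only maximizers of the product are the SIC vectors themselves. -/
open scoped BigOperators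

/-- The standard Hermitian inner product on `ℂ^d`, conjugate-linear in the
first argument: `⟨φ, ψ⟩ = ∑ i, conj (φ i) * ψ i`. -/
noncomputable def inp {d : ℕ} (φ ψ : Fin d → ℂ) : ℂ :=
  ∑ i, (starRingEnd ℂ) (φ i) * ψ i

noncomputable def hs {d : ℕ} (A B : Fin d → Fin d → ℂ) : ℂ :=
  ∑ a, ∑ b, (starRingEnd ℂ) (A a b) * B a b

noncomputable def outer {d : ℕ} (v : Fin d → ℂ) : Fin d → Fin d → ℂ :=
  fun a b => v a * (starRingEnd ℂ) (v b)

lemma conj_inp {d : ℕ} (v w : Fin d → ℂ) :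
    (starRingEnd ℂ) (inp v w) = ∑ b, v b * (starRingEnd ℂ) (w b) := by
  simp only [inp, map_sum, map_mul, RingHomCompTriple.comp_apply, Complex.conj_conj,
    RingHom.id_apply]

lemma inp_conj_symm {d : ℕ} (v w : Fin d → ℂ) :
    (starRingEnd ℂ) (inp v w) = inp w v := by
  rw [conj_inp, inp]
  exact Finset.sum_congr rfl fun i _ => by ring

lemma hs_outer {d : ℕ} (v w : Fin d → ℂ) :
    hs (outer v) (outer w) = inp v w * (starRingEnd ℂ) (inp v w) := by
  rw [conj_inp, inp, hs, Finset.sum_mul_sum]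
  refine Finset.sum_congr rfl fun a _ => Finset.sum_congr rfl fun b _ => ?_
  simp only [outer, map_mul, RingHomCompTriple.comp_apply, Complex.conj_conj,
    RingHom.id_apply]
  ring

lemma tr_outer {d : ℕ} (v : Fin d → ℂ) :
    ∑ a, outer v a a = inp v v := by
  simp only [outer, inp]
  exact Finset.sum_congr rfl fun i _ => by ring

lemma hs_sum_smul {d n : ℕ} (A : Fin d → Fin d → ℂ) (c : Fin n → ℂ)
    (M : Fin n → (Fin d → Fin d → ℂ)) :
    hs A (∑ j, c j • M j) = ∑ j, c j * hs A (M j) := by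
  simp only [hs, Finset.sum_apply, Pi.smul_apply, smul_eq_mul, Finset.mul_sum]
  calc (∑ a, ∑ b, ∑ j, (starRingEnd ℂ) (A a b) * (c j * M j a b))
      = ∑ a, ∑ j, ∑ b, (starRingEnd ℂ) (A a b) * (c j * M j a b) :=
        Finset.sum_congr rfl fun a _ => Finset.sum_comm
    _ = ∑ j, ∑ a, ∑ b, (starRingEnd ℂ) (A a b) * (c j * M j a b) :=
        Finset.sum_comm
    _ = ∑ j, ∑ a, ∑ b, c j * ((starRingEnd ℂ) (A a b) * M j a b) :=
        Finset.sum_congr rfl fun j _ => Finset.sum_congr rfl fun a _ =>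
          Finset.sum_congr rfl fun b _ => by ring

lemma moment_sums {d : ℕ} (hd : 1 ≤ d)
    (ψ : Fin (d ^ 2) → (Fin d → ℂ)) (hψ : ∀ j, inp (ψ j) (ψ j) = 1)
    (hSIC : ∀ j k, j ≠ k →
      ‖inp (ψ j) (ψ k)‖ ^ 2 = 1 / (d + 1))
    (φ : Fin d → ℂ) (hφ : inp φ φ = 1) :
    (∑ j, ‖inp φ (ψ j)‖ ^ 2 = d) ∧
      (∑ j, (‖inp φ (ψ j)‖ ^ 2) ^ 2 = 2 * d / (d + 1)) := by
  classical
  set D : ℂ := (d : ℂ) + 1 with hDdef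
  have hD0 : D ≠ 0 := by
    have : ((d + 1 : ℕ) : ℂ) ≠ 0 := Nat.cast_ne_zero.mpr (Nat.succ_ne_zero d)
    simpa [hDdef] using this
  have hd0 : (d : ℂ) ≠ 0 := Nat.cast_ne_zero.mpr (by omega)
  set M : Fin (d ^ 2) → (Fin d → Fin d → ℂ) := fun j => outer (ψ j) with hM
  -- Gram entries
  have hMM : ∀ j k, hs (M j) (M k) = if j = k then 1 else 1 / D := by
    intro j k
    rw [hM, hs_outer, Complex.mul_conj]
    by_cases h : j = k
    · subst h; rw [if_pos rfl]
      have : Complex.normSq (inp (ψ j) (ψ j)) = 1 := by rw [hψ j]; simp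
      rw [this]; simp
    · rw [if_neg h]
      have h2 : Complex.normSq (inp (ψ j) (ψ k)) = 1 / ((d : ℝ) + 1) := by
        rw [← Complex.sq_norm]; exact hSIC j k h
      rw [h2, hDdef]
      push_cast
      ring
  have htrM : ∀ j, ∑ a, M j a a = 1 := fun j => by rw [hM, tr_outer, hψ j]
  -- abbreviation for the overlaps
  set z : Fin (d ^ 2) → ℂ := fun j => ((‖inp φ (ψ j)‖ ^ 2 : ℝ) : ℂ) with hz
  have hMX : ∀ j, hs (M j) (outer φ) = z j := by
    intro j
    rw [hM, hs_outer, Complex.mul_conj, hz]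
    have : Complex.normSq (inp (ψ j) φ) = Complex.normSq (inp φ (ψ j)) := by
      rw [← inp_conj_symm φ (ψ j), Complex.normSq_conj]
    rw [this, ← Complex.sq_norm]
  have hXM : ∀ j, hs (outer φ) (M j) = z j := by
    intro j
    rw [hM, hs_outer, Complex.mul_conj, hz, ← Complex.sq_norm]
  have hXX : hs (outer φ) (outer φ) = 1 := by
    rw [hs_outer, Complex.mul_conj, hφ]; simp
  -- linear independence
  have hli : LinearIndependent ℂ M := by
    rw [Fintype.linearIndependent_iff]
    intro g hg
    have key : ∀ k, (d : ℂ) * g k + ∑ j, g j = 0 := by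
      intro k
      have h0 : hs (M k) (∑ j, g j • M j) = 0 := by rw [hg]; simp [hs]
      rw [hs_sum_smul] at h0
      have hsum : ∑ j, g j * hs (M k) (M j)
          = (1 / D) * ((∑ j, g j) - g k) + g k := by
        rw [← Finset.sum_erase_add _ _ (Finset.mem_univ k), hMM k k, if_pos rfl,
          mul_one]
        congr 1
        rw [← Finset.sum_erase_eq_sub (Finset.mem_univ k), Finset.mul_sum]
        refine Finset.sum_congr rfl fun j hj => ?_
        rw [hMM k j, if_neg (Finset.ne_of_mem_erase hj).symm]
        ring
      rw [hsum] at h0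
      have h0' : ((∑ j, g j) - g k) + D * g k = 0 := by
        have := congrArg (fun t => D * t) h0
        field_simp at this
        linear_combination this
      rw [hDdef] at h0'
      linear_combination h0'
    have hS : (∑ j, g j) = 0 := by
      have h1 : ∑ k, ((d : ℂ) * g k + ∑ j, g j) = 0 :=
        Finset.sum_eq_zero fun k _ => key k
      have h2 : (d : ℂ) * (∑ k, g k) + (d ^ 2 : ℕ) * (∑ j, g j) = 0 := by
        rw [← h1, Finset.sum_add_distrib, Finset.mul_sum, Finset.sum_const,
          Finset.card_univ, Fintype.card_fin, nsmul_eq_mul]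
      have hne : (d : ℂ) + (d ^ 2 : ℕ) ≠ 0 := by
        have : ((d + d ^ 2 : ℕ) : ℂ) ≠ 0 := Nat.cast_ne_zero.mpr (Nat.add_pos_left (by omega) _).ne'
        push_cast at this ⊢
        exact this
      rcases mul_eq_zero.mp (show ((d : ℂ) + (d ^ 2 : ℕ)) * (∑ j, g j) = 0 by
        linear_combination h2) with h | h
      · exact absurd h hne
      · exact h
    intro k
    have := key k
    rw [hS, add_zero] at this
    exact (mul_eq_zero.mp this).resolve_left hd0
  -- spanning
  have hcard : Fintype.card (Fin (d ^ 2)) = Module.finrank ℂ (Fin d → Fin d → ℂ) := by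
    rw [Fintype.card_fin, Module.finrank_pi_fintype, Fintype.sum_congr _ _
      (fun i => Module.finrank_fintype_fun_eq_card (η := Fin d) (R := ℂ))]
    simp [sq]
  have hspan : Submodule.span ℂ (Set.range M) = ⊤ :=
    hli.span_eq_top_of_card_eq_finrank' hcard
  obtain ⟨c, hc⟩ : ∃ c : Fin (d ^ 2) → ℂ, ∑ j, c j • M j = outer φ := by
    have hmem : outer φ ∈ Submodule.span ℂ (Set.range M) := by rw [hspan]; trivial
    obtain ⟨l, hl⟩ := Finsupp.mem_span_range_iff_exists_finsupp.mp hmem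
    refine ⟨l, ?_⟩
    rw [← hl, Finsupp.sum_fintype]
    intro i; exact zero_smul ℂ _
  -- trace relation : ∑ c = 1
  have hSc : ∑ j, c j = 1 := by
    have t : ∑ a, (∑ j, c j • M j) a a = ∑ j, c j := by
      simp only [Finset.sum_apply, Pi.smul_apply, smul_eq_mul]
      rw [Finset.sum_comm]
      refine Finset.sum_congr rfl fun j _ => ?_
      rw [← Finset.mul_sum, htrM j, mul_one]
    calc ∑ j, c j = ∑ a, (∑ j, c j • M j) a a := t.symm
      _ = ∑ a, outer φ a a := by rw [hc]
      _ = 1 := by rw [tr_outer, hφ]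
  -- Gram sum helper for c
  have gram_sum : ∀ k, ∑ j, c j * hs (M k) (M j)
      = (1 / D) * ((∑ j, c j) - c k) + c k := by
    intro k
    rw [← Finset.sum_erase_add _ _ (Finset.mem_univ k), hMM k k, if_pos rfl, mul_one]
    congr 1
    rw [← Finset.sum_erase_eq_sub (Finset.mem_univ k), Finset.mul_sum]
    refine Finset.sum_congr rfl fun j hj => ?_
    rw [hMM k j, if_neg (Finset.ne_of_mem_erase hj).symm]
    ring
  -- coefficients in terms of overlaps
  have hck : ∀ k, (d : ℂ) * c k = D * z k - 1 := by
    intro k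
    have h0 : hs (M k) (outer φ) = ∑ j, c j * hs (M k) (M j) := by
      rw [← hc, hs_sum_smul]
    rw [hMX k, gram_sum k, hSc] at h0
    have h1 := congrArg (fun t => D * t) h0
    field_simp at h1
    rw [hDdef] at h1 ⊢
    linear_combination -h1
  -- first moment
  have hsum_z : ∑ j, z j = (d : ℂ) := by
    have h1 : ∑ k, (d : ℂ) * c k = ∑ k, (D * z k - 1) :=
      Finset.sum_congr rfl fun k _ => hck k
    rw [← Finset.mul_sum, hSc, mul_one, Finset.sum_sub_distrib, ← Finset.mul_sum,
      Finset.sum_const, Finset.card_univ, Fintype.card_fin] at h1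
    have h2 : D * (∑ j, z j) = D * (d : ℂ) := by
      rw [hDdef] at h1 ⊢
      push_cast at h1 ⊢
      linear_combination -h1
    exact mul_left_cancel₀ hD0 h2
  -- second moment
  have hsq_z : ∑ j, z j ^ 2 = 2 * (d : ℂ) / D := by
    have h3 : (1 : ℂ) = ∑ j, c j * z j := by
      have t := hs_sum_smul (outer φ) c M
      rw [hc, hXX] at t
      rw [t]
      exact Finset.sum_congr rfl fun j _ => by rw [hXM j]
    have h4 : (d : ℂ) * ∑ j, c j * z j = ∑ j, (D * z j - 1) * z j := by
      rw [Finset.mul_sum]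
      exact Finset.sum_congr rfl fun j _ => by rw [← mul_assoc, hck j]
    have h4' : (d : ℂ) = ∑ j, (D * z j - 1) * z j := by
      rw [← h4, ← h3, mul_one]
    have h5 : (d : ℂ) = D * (∑ j, z j ^ 2) - ∑ j, z j := by
      rw [h4', Finset.mul_sum, ← Finset.sum_sub_distrib]
      exact Finset.sum_congr rfl fun j _ => by ring
    rw [hsum_z] at h5
    rw [eq_div_iff hD0]
    rw [hDdef] at h5 ⊢
    linear_combination -h5
  simp only [hz] at hsum_z hsq_z
  rw [hDdef] at hsq_z
  constructor
  · have h6 : ((∑ j, ‖inp φ (ψ j)‖ ^ 2 : ℝ) : ℂ) = ((d : ℝ) : ℂ) := by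
      push_cast at hsum_z ⊢
      exact hsum_z
    exact_mod_cast h6
  · have h6 : ((∑ j, (‖inp φ (ψ j)‖ ^ 2) ^ 2 : ℝ) : ℂ)
        = ((2 * (d : ℝ) / ((d : ℝ) + 1) : ℝ) : ℂ) := by
      push_cast at hsq_z ⊢
      exact hsq_z
    exact_mod_cast h6



lemma num1 {d : ℕ} (hd : 1 ≤ d) : Real.log ((d:ℝ)+1) < d := by
  have h1 : (0:ℝ) < (d:ℝ) + 1 := by positivity
  have := Real.log_lt_sub_one_of_pos h1 (by
    have : (1:ℝ) ≤ (d:ℝ) := by exact_mod_cast hd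
    linarith)
  linarith

lemma num2 {d : ℕ} (hd : 1 ≤ d) : 2 * ((d:ℝ) - Real.log ((d:ℝ)+1)) < (d:ℝ)^2 := by
  have hd1 : (1:ℝ) ≤ (d:ℝ) := by exact_mod_cast hd
  rcases eq_or_lt_of_le hd1 with h | h
  · rw [← h]
    have := Real.log_two_gt_d9
    norm_num
    linarith
  · have h2 : (2:ℝ) ≤ (d:ℝ) := by
      have : (2:ℕ) ≤ d := by exact_mod_cast h
      exact_mod_cast this
    have hL : 0 < Real.log ((d:ℝ)+1) := Real.log_pos (by linarith)
    nlinarith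

noncomputable def gfun (d : ℕ) (y : ℝ) : ℝ :=
  (y - 1) - (((d:ℝ) - Real.log ((d:ℝ)+1)) / (d:ℝ)^2) * (y - 1)^2 - Real.log y

lemma gfun_hasDeriv (d : ℕ) {y : ℝ} (hy : y ≠ 0) :
    HasDerivAt (gfun d)
      (1 - 2 * (((d:ℝ) - Real.log ((d:ℝ)+1)) / (d:ℝ)^2) * (y - 1) - 1/y) y := by
  set β : ℝ := ((d:ℝ) - Real.log ((d:ℝ)+1)) / (d:ℝ)^2 with hβ
  have h1 : HasDerivAt (fun y : ℝ => y - 1) 1 y := (hasDerivAt_id y).sub_const 1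
  have h2 : HasDerivAt (fun y : ℝ => (y-1)^2) (2*(y-1)) y := by
    have := h1.fun_pow 2
    simpa using this
  have h3 : HasDerivAt (fun y : ℝ => β*(y-1)^2) (β*(2*(y-1))) y := h2.const_mul β
  have h4 : HasDerivAt Real.log y⁻¹ y := Real.hasDerivAt_log hy
  have h5 := (h1.fun_sub h3).fun_sub h4
  exact h5.congr_deriv (by rw [one_div]; ring)

lemma gfun_deriv (d : ℕ) {y : ℝ} (hy : y ≠ 0) :
    deriv (gfun d) y
      = 1 - 2 * (((d:ℝ) - Real.log ((d:ℝ)+1)) / (d:ℝ)^2) * (y - 1) - 1/y :=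
  (gfun_hasDeriv d hy).deriv

lemma gfun_deriv_factor (d : ℕ) {y : ℝ} (hy : y ≠ 0) :
    deriv (gfun d) y
      = (y - 1) * (1 - 2 * (((d:ℝ) - Real.log ((d:ℝ)+1)) / (d:ℝ)^2) * y) / y := by
  rw [gfun_deriv d hy]
  field_simp
  ring

lemma gfun_cont (d : ℕ) {s : Set ℝ} (hs : ∀ x ∈ s, x ≠ 0) :
    ContinuousOn (gfun d) s := by
  refine ContinuousOn.sub ?_ (Real.continuousOn_log.mono ?_)
  · exact (((continuous_id.sub continuous_const)).sub
      ((continuous_const.mul ((continuous_id.sub continuous_const).pow 2)))).continuousOn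
  · intro x hx
    simp [hs x hx]

lemma gfun_one (d : ℕ) : gfun d 1 = 0 := by simp [gfun]

lemma gfun_top {d : ℕ} (hd : 1 ≤ d) : gfun d ((d:ℝ)+1) = 0 := by
  have hd0 : (d:ℝ) ≠ 0 := by
    have : (1:ℝ) ≤ (d:ℝ) := by exact_mod_cast hd
    linarith
  simp only [gfun]
  have h1 : ((d:ℝ)+1) - 1 = (d:ℝ) := by ring
  rw [h1]
  field_simp
  ring

lemma gfun_pos {d : ℕ} (hd : 1 ≤ d) {y : ℝ} (hy0 : 0 < y) (hyd : y ≤ (d:ℝ)+1)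
    (hne1 : y ≠ 1) (hned : y ≠ (d:ℝ)+1) : 0 < gfun d y := by
  have hd1 : (1:ℝ) ≤ (d:ℝ) := by exact_mod_cast hd
  set β : ℝ := ((d:ℝ) - Real.log ((d:ℝ)+1)) / (d:ℝ)^2 with hβdef
  have hd2 : (0:ℝ) < (d:ℝ)^2 := by positivity
  have hβpos : 0 < β := div_pos (by linarith [num1 hd]) hd2
  have h2β : 2 * β < 1 := by
    rw [hβdef, show 2 * (((d:ℝ) - Real.log ((d:ℝ)+1)) / (d:ℝ)^2)
        = 2 * ((d:ℝ) - Real.log ((d:ℝ)+1)) / (d:ℝ)^2 by ring,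
      div_lt_iff₀ hd2]
    linarith [num2 hd]
  rcases lt_trichotomy y 1 with hy1 | hy1 | hy1
  · -- strictly decreasing on [y, 1]
    have hanti : StrictAntiOn (gfun d) (Set.Icc y 1) := by
      refine strictAntiOn_of_deriv_neg (convex_Icc y 1)
        (gfun_cont d fun x hx => by
          rcases hx with ⟨h1, _⟩; exact ne_of_gt (lt_of_lt_of_le hy0 h1)) ?_
      intro x hx
      rw [interior_Icc] at hx
      obtain ⟨hx1, hx2⟩ := hx
      have hx0 : 0 < x := lt_trans hy0 hx1
      rw [gfun_deriv_factor d (ne_of_gt hx0)]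
      apply div_neg_of_neg_of_pos _ hx0
      apply mul_neg_of_neg_of_pos (by linarith)
      nlinarith
    have := hanti (Set.left_mem_Icc.mpr (le_of_lt hy1))
      (Set.right_mem_Icc.mpr (le_of_lt hy1)) hy1
    rwa [gfun_one d] at this
  · exact absurd hy1 hne1
  · rcases le_or_gt (2 * β * y) 1 with hcase | hcase
    · -- strictly increasing on [1, y]
      have hmono : StrictMonoOn (gfun d) (Set.Icc 1 y) := by
        refine strictMonoOn_of_deriv_pos (convex_Icc 1 y)
          (gfun_cont d fun x hx => by
            rcases hx with ⟨h1, _⟩; positivity) ?_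
        intro x hx
        rw [interior_Icc] at hx
        obtain ⟨hx1, hx2⟩ := hx
        have hx0 : 0 < x := by linarith
        rw [gfun_deriv_factor d (ne_of_gt hx0)]
        apply div_pos _ hx0
        apply mul_pos (by linarith)
        nlinarith
      have := hmono (Set.left_mem_Icc.mpr (le_of_lt hy1))
        (Set.right_mem_Icc.mpr (le_of_lt hy1)) hy1
      rwa [gfun_one d] at this
    · -- strictly decreasing on [y, d+1]
      have hyd' : y < (d:ℝ)+1 := lt_of_le_of_ne hyd hned
      have hanti : StrictAntiOn (gfun d) (Set.Icc y ((d:ℝ)+1)) := by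
        refine strictAntiOn_of_deriv_neg (convex_Icc y ((d:ℝ)+1))
          (gfun_cont d fun x hx => by
            rcases hx with ⟨h1, _⟩; exact ne_of_gt (lt_of_lt_of_le hy0 h1)) ?_
        intro x hx
        rw [interior_Icc] at hx
        obtain ⟨hx1, hx2⟩ := hx
        have hx0 : 0 < x := lt_trans hy0 hx1
        rw [gfun_deriv_factor d (ne_of_gt hx0)]
        apply div_neg_of_neg_of_pos _ hx0
        apply mul_neg_of_pos_of_neg (by linarith)
        have : 2 * β * y < 2 * β * x := by
          apply mul_lt_mul_of_pos_left hx1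
          linarith
        linarith
      have := hanti (Set.left_mem_Icc.mpr (le_of_lt hyd'))
        (Set.right_mem_Icc.mpr (le_of_lt hyd')) hyd'
      rwa [gfun_top hd] at this

lemma gfun_nonneg {d : ℕ} (hd : 1 ≤ d) {y : ℝ} (hy0 : 0 < y) (hyd : y ≤ (d:ℝ)+1) :
    0 ≤ gfun d y := by
  by_cases h1 : y = 1
  · rw [h1, gfun_one]
  by_cases h2 : y = (d:ℝ)+1
  · rw [h2, gfun_top hd]
  exact le_of_lt (gfun_pos hd hy0 hyd h1 h2)

lemma gfun_eq_zero_iff {d : ℕ} (hd : 1 ≤ d) {y : ℝ} (hy0 : 0 < y)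
    (hyd : y ≤ (d:ℝ)+1) : gfun d y = 0 ↔ y = 1 ∨ y = (d:ℝ)+1 := by
  constructor
  · intro h
    by_contra hcon
    push_neg at hcon
    exact absurd h (ne_of_gt (gfun_pos hd hy0 hyd hcon.1 hcon.2))
  · rintro (h | h)
    · rw [h, gfun_one]
    · rw [h, gfun_top hd]


noncomputable def toE {d : ℕ} : (Fin d → ℂ) ≃ₗ[ℂ] EuclideanSpace ℂ (Fin d) :=
  (WithLp.linearEquiv 2 ℂ (Fin d → ℂ)).symm

lemma inp_eq_inner {d : ℕ} (v w : Fin d → ℂ) :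
    inp v w = inner ℂ (toE v) (toE w) := by
  rw [PiLp.inner_apply]
  simp only [RCLike.inner_apply]
  unfold inp
  exact Finset.sum_congr rfl fun i _ => mul_comm _ _

lemma inp_conj_symm' {d : ℕ} (v w : Fin d → ℂ) :
    inp w v = (starRingEnd ℂ) (inp v w) := by
  simp only [inp, map_sum, map_mul, RingHomCompTriple.comp_apply, Complex.conj_conj,
    RingHom.id_apply]
  exact Finset.sum_congr rfl fun i _ => by ring

lemma norm_of_inp_one {d : ℕ} (v : Fin d → ℂ) (hv : inp v v = 1) :
    ‖toE v‖ = 1 := by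
  have h := inp_eq_inner (d := d) v v
  rw [hv] at h
  have h2 := inner_self_eq_norm_sq (𝕜 := ℂ) (toE v)
  rw [← h] at h2
  simp only [RCLike.one_re] at h2
  nlinarith [norm_nonneg (toE v)]

lemma abs_inp_le_one {d : ℕ} (v w : Fin d → ℂ) (hv : inp v v = 1)
    (hw : inp w w = 1) : ‖inp v w‖ ≤ 1 := by
  have h := norm_inner_le_norm (𝕜 := ℂ) (toE v) (toE w)
  rw [← inp_eq_inner, norm_of_inp_one v hv, norm_of_inp_one w hw] at h
  simpa using h

lemma cs_equality {d : ℕ} (v w : Fin d → ℂ) (hv : inp v v = 1)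
    (hw : inp w w = 1) (h : ‖inp v w‖ = 1) :
    ∃ c : ℂ, ‖c‖ = 1 ∧ v = c • w := by
  have hwn : ‖toE w‖ = 1 := norm_of_inp_one w hw
  have hvn : ‖toE v‖ = 1 := norm_of_inp_one v hv
  have hw0 : toE w ≠ 0 := by intro h0; rw [h0] at hwn; simp at hwn
  have hv0 : toE v ≠ 0 := by intro h0; rw [h0] at hvn; simp at hvn
  have key : ‖(inner ℂ (toE w) (toE v) : ℂ)‖ = ‖toE w‖ * ‖toE v‖ := by
    rw [← inp_eq_inner, hwn, hvn, mul_one, inp_conj_symm' v w,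
      Complex.norm_conj, h]
  obtain ⟨r, hr0, hrv⟩ := (norm_inner_eq_norm_iff hw0 hv0).mp key
  refine ⟨r, ?_, ?_⟩
  · have h5 : ‖toE v‖ = ‖r‖ * ‖toE w‖ := by rw [hrv, norm_smul]
    rw [hvn, hwn, mul_one] at h5
    rw [← h5]
  · have h6 : toE v = toE (r • w) := by rw [map_smul]; exact hrv
    exact toE.injective h6

lemma core {d : ℕ} (hd : 1 ≤ d) (x : Fin (d^2) → ℝ) (hx0 : ∀ j, 0 ≤ x j)
    (hx1 : ∀ j, x j ≤ 1) (hsum : ∑ j, x j = d)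
    (hsq : ∑ j, (x j)^2 = 2*d/((d:ℝ)+1)) :
    ∏ j, x j ≤ (1/((d:ℝ)+1))^(d^2-1) ∧
      (∏ j, x j = (1/((d:ℝ)+1))^(d^2-1) → ∃ j, x j = 1) := by
  have hd1 : (1:ℝ) ≤ (d:ℝ) := by exact_mod_cast hd
  have hD0 : (0:ℝ) < (d:ℝ)+1 := by linarith
  have hn : 1 ≤ d^2 := by
    calc 1 = 1^2 := by norm_num
    _ ≤ d^2 := Nat.pow_le_pow_left hd 2
  have hBpos : (0:ℝ) < (1/((d:ℝ)+1))^(d^2-1) := by positivity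
  by_cases hzero : ∀ j, x j ≠ 0
  case neg =>
    push_neg at hzero
    obtain ⟨j0, hj0⟩ := hzero
    have hprod0 : ∏ j, x j = 0 := Finset.prod_eq_zero (Finset.mem_univ j0) hj0
    rw [hprod0]
    exact ⟨le_of_lt hBpos, fun he => absurd he.symm (ne_of_gt hBpos)⟩
  case pos =>
    have hxpos : ∀ j, 0 < x j := fun j => lt_of_le_of_ne (hx0 j) (Ne.symm (hzero j))
    set L := Real.log ((d:ℝ)+1) with hLdef
    set β : ℝ := ((d:ℝ) - L)/(d:ℝ)^2 with hβdef
    have hrep : ∀ y : ℝ, Real.log y = (y - 1) - β*(y-1)^2 - gfun d y := by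
      intro y
      rw [hβdef, hLdef]
      simp only [gfun]
      ring
    -- first and second moments of y - 1
    have hsum1 : ∑ j, (((d:ℝ)+1) * x j - 1) = (d:ℝ) := by
      rw [Finset.sum_sub_distrib, ← Finset.mul_sum, hsum, Finset.sum_const,
        Finset.card_univ, Fintype.card_fin, nsmul_eq_mul]
      push_cast
      ring
    have hsum2 : ∑ j, (((d:ℝ)+1) * x j - 1)^2 = (d:ℝ)^2 := by
      have h1 : ∀ j, (((d:ℝ)+1) * x j - 1)^2
          = ((d:ℝ)+1)^2 * (x j)^2 - 2*((d:ℝ)+1) * x j + 1 := fun j => by ring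
      rw [Finset.sum_congr rfl fun j _ => h1 j]
      rw [Finset.sum_add_distrib, Finset.sum_sub_distrib, ← Finset.mul_sum,
        ← Finset.mul_sum, hsum, hsq, Finset.sum_const, Finset.card_univ,
        Fintype.card_fin, nsmul_eq_mul]
      have h2 : ((d:ℝ)+1)^2 * (2*(d:ℝ)/((d:ℝ)+1)) = 2*(d:ℝ)*((d:ℝ)+1) := by
        field_simp
      rw [h2]
      push_cast
      ring
    have hkey : ∑ j, Real.log (((d:ℝ)+1) * x j)
        = L - ∑ j, gfun d (((d:ℝ)+1) * x j) := by
      rw [Finset.sum_congr rfl fun j _ => hrep (((d:ℝ)+1) * x j)]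
      rw [Finset.sum_sub_distrib, Finset.sum_sub_distrib, ← Finset.mul_sum,
        hsum1, hsum2]
      have hβd : β * (d:ℝ)^2 = (d:ℝ) - L := by
        rw [hβdef]
        field_simp
      rw [hβd]
      ring
    have hypos : ∀ j, 0 < ((d:ℝ)+1) * x j := fun j => mul_pos hD0 (hxpos j)
    have hyle : ∀ j, ((d:ℝ)+1) * x j ≤ (d:ℝ)+1 := fun j => by
      nlinarith [hx1 j]
    have hgn : ∀ j, 0 ≤ gfun d (((d:ℝ)+1) * x j) := fun j =>
      gfun_nonneg hd (hypos j) (hyle j)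
    have hGn : 0 ≤ ∑ j, gfun d (((d:ℝ)+1) * x j) :=
      Finset.sum_nonneg fun j _ => hgn j
    have hshift : ∀ j, Real.log (((d:ℝ)+1) * x j) = L + Real.log (x j) :=
      fun j => by rw [Real.log_mul (ne_of_gt hD0) (hzero j), hLdef]
    have hsin : ∑ j, Real.log (((d:ℝ)+1) * x j)
        = (d:ℝ)^2 * L + ∑ j, Real.log (x j) := by
      rw [Finset.sum_congr rfl fun j _ => hshift j, Finset.sum_add_distrib,
        Finset.sum_const, Finset.card_univ, Fintype.card_fin, nsmul_eq_mul]
      push_cast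
      ring
    have hcast : (((d^2 - 1 : ℕ)):ℝ) = (d:ℝ)^2 - 1 := by
      rw [Nat.cast_sub hn]
      push_cast
      ring
    have hlogB : Real.log ((1/((d:ℝ)+1))^(d^2-1)) = (1 - (d:ℝ)^2) * L := by
      rw [Real.log_pow, hcast, one_div, Real.log_inv, hLdef]
      ring
    have hprodpos : 0 < ∏ j, x j := Finset.prod_pos fun j _ => hxpos j
    have hlogprod : Real.log (∏ j, x j)
        = Real.log ((1/((d:ℝ)+1))^(d^2-1)) - ∑ j, gfun d (((d:ℝ)+1) * x j) := by
      rw [Real.log_prod fun j _ => hzero j, hlogB]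
      have := hkey
      rw [hsin] at this
      linarith
    constructor
    · rw [← Real.log_le_log_iff hprodpos hBpos, hlogprod]
      linarith
    · intro he
      have hG : ∑ j, gfun d (((d:ℝ)+1) * x j) = 0 := by
        have h3 := congrArg Real.log he
        rw [hlogprod] at h3
        linarith
      have hall := (Finset.sum_eq_zero_iff_of_nonneg fun j _ => hgn j).mp hG
      by_contra hno
      push_neg at hno
      have hxval : ∀ j, x j = 1/((d:ℝ)+1) := by
        intro j
        rcases (gfun_eq_zero_iff hd (hypos j) (hyle j)).mp
          (hall j (Finset.mem_univ j)) with h | h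
        · field_simp at h ⊢
          linarith
        · exfalso
          apply hno j
          have := mul_left_cancel₀ (ne_of_gt hD0) (h.trans (mul_one ((d:ℝ)+1)).symm)
          exact this
      rw [Finset.sum_congr rfl fun j _ => hxval j, Finset.sum_const,
        Finset.card_univ, Fintype.card_fin, nsmul_eq_mul] at hsum
      have : (d:ℝ)^2 = (d:ℝ)*((d:ℝ)+1) := by
        field_simp at hsum
        push_cast at hsum
        linarith
      nlinarith

theorem stmt15 (d : ℕ) (hd : 1 ≤ d)
    (ψ : Fin (d ^ 2) → (Fin d → ℂ)) (hψ : ∀ j, inp (ψ j) (ψ j) = 1)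
    (hSIC : ∀ j k, j ≠ k →
      ‖inp (ψ j) (ψ k)‖ ^ 2 = 1 / (d + 1))
    (φ : Fin d → ℂ) (hφ : inp φ φ = 1) :
    ∏ j, ‖inp φ (ψ j)‖ ^ 2 ≤ (1 / ((d : ℝ) + 1)) ^ (d ^ 2 - 1) ∧
      (∏ j, ‖inp φ (ψ j)‖ ^ 2 = (1 / ((d : ℝ) + 1)) ^ (d ^ 2 - 1) ↔
        ∃ j, ∃ c : ℂ, ‖c‖ = 1 ∧ φ = c • ψ j) := by
  obtain ⟨hsum, hsq⟩ := moment_sums hd ψ hψ hSIC φ hφ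
  have hd1 : (1:ℝ) ≤ (d:ℝ) := by exact_mod_cast hd
  have hD0 : (0:ℝ) < (d:ℝ)+1 := by linarith
  have hx0 : ∀ j, 0 ≤ ‖inp φ (ψ j)‖ ^ 2 := fun j => by positivity
  have hx1 : ∀ j, ‖inp φ (ψ j)‖ ^ 2 ≤ 1 := fun j => by
    have h := abs_inp_le_one φ (ψ j) hφ (hψ j)
    nlinarith [norm_nonneg (inp φ (ψ j))]
  obtain ⟨hle, heq⟩ :=
    core hd (fun j => ‖inp φ (ψ j)‖ ^ 2) hx0 hx1 hsum hsq
  have hscaled : ∀ (j : Fin (d^2)) (c : ℂ), ‖c‖ = 1 → φ = c • ψ j →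
      ∀ k, ‖inp φ (ψ k)‖ ^ 2
        = if k = j then 1 else 1/((d:ℝ)+1) := by
    intro j c hc hφc k
    have h1 : inp φ (ψ k) = (starRingEnd ℂ) c * inp (ψ j) (ψ k) := by
      rw [hφc]
      simp only [inp, Pi.smul_apply, smul_eq_mul, map_mul, Finset.mul_sum]
      exact Finset.sum_congr rfl fun i _ => by ring
    rw [h1, norm_mul, Complex.norm_conj, hc, one_mul]
    by_cases hkj : k = j
    · subst hkj
      rw [if_pos rfl, hψ k]
      simp
    · rw [if_neg hkj]
      exact hSIC j k (fun hh => hkj hh.symm)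
  refine ⟨hle, ⟨fun he => ?_, ?_⟩⟩
  · obtain ⟨j, hj⟩ := heq he
    have habs : ‖inp φ (ψ j)‖ = 1 := by
      have hj' : ‖inp φ (ψ j)‖ ^ 2 = 1 := hj
      nlinarith [norm_nonneg (inp φ (ψ j))]
    obtain ⟨c, hc, hφc⟩ := cs_equality φ (ψ j) hφ (hψ j) habs
    exact ⟨j, c, hc, hφc⟩
  · rintro ⟨j, c, hc, hφc⟩
    rw [← Finset.mul_prod_erase Finset.univ _ (Finset.mem_univ j),
      hscaled j c hc hφc j, if_pos rfl, one_mul,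
      Finset.prod_congr rfl (fun k hk => by
        rw [hscaled j c hc hφc k, if_neg (Finset.ne_of_mem_erase hk)]),
      Finset.prod_const, Finset.card_erase_of_mem (Finset.mem_univ j),
      Finset.card_univ, Fintype.card_fin]
end

section
/- Let d ≥ 1 and let ψ₁, …, ψ_{d²} be d² unit vectors in ℂ^d with Σ_{j=1}^{d²} ψ_j ψ_j† = d·I. Suppose that for every index j one has ∏_{k=1}^{d²} |⟨ψ_j, ψ_k⟩|² = (d+1)^{−(d²−1)} (the factor with k = j being 1). Then |⟨ψ_j, ψ_k⟩|² = 1/(d+1) for all j ≠ k; that is, the vectors ψ₁, …, ψ_{d²} form a SIC POVM. -/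
open scoped BigOperators

theorem stmt16 (d : ℕ) (hd : 1 ≤ d)
    (ψ : Fin (d ^ 2) → (Fin d → ℂ)) (hψ : ∀ j, inp (ψ j) (ψ j) = 1)
    (hcomp : ∑ j, Matrix.vecMulVec (ψ j) (star (ψ j))
      = (d : ℂ) • (1 : Matrix (Fin d) (Fin d) ℂ))
    (hprod : ∀ j, ∏ k, ‖inp (ψ j) (ψ k)‖ ^ 2
      = (1 / ((d : ℝ) + 1)) ^ (d ^ 2 - 1)) :
    ∀ j k, j ≠ k → ‖inp (ψ j) (ψ k)‖ ^ 2 = 1 / (d + 1) := by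
  intro j k hjk
  have hd2 : 2 ≤ d := by
    by_contra h
    have hd1 : d = 1 := by omega
    subst hd1
    have h1 := j.isLt
    have h2 := k.isLt
    exact hjk (Fin.ext (by omega))
  set a : Fin (d ^ 2) → ℝ := fun m => ‖inp (ψ j) (ψ m)‖ ^ 2 with ha
  -- entries of the completeness relation
  have hE : ∀ x y : Fin d, (∑ m, ψ m x * (starRingEnd ℂ) (ψ m y))
      = if x = y then (d : ℂ) else 0 := by
    intro x y
    have h := congrFun (congrFun hcomp x) y
    simpa [Matrix.sum_apply, Matrix.vecMulVec_apply, Matrix.one_apply,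
      Matrix.smul_apply, Pi.star_apply, mul_comm] using h
  -- the sum of |⟨ψ j, ψ m⟩|² over m equals d
  have hsumC : (∑ m, ((‖inp (ψ j) (ψ m)‖ : ℂ)) ^ 2) = (d : ℂ) := by
    have habs : ∀ m, ((‖inp (ψ j) (ψ m)‖ : ℂ)) ^ 2
        = inp (ψ j) (ψ m) * (starRingEnd ℂ) (inp (ψ j) (ψ m)) := by
      intro m
      rw [Complex.mul_conj, ← Complex.sq_norm]
      push_cast
      ring
    calc (∑ m, ((‖inp (ψ j) (ψ m)‖ : ℂ)) ^ 2)
        = ∑ m, ∑ x, ∑ y, ((starRingEnd ℂ) (ψ j x) * ψ j y)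
            * (ψ m x * (starRingEnd ℂ) (ψ m y)) := by
          refine Finset.sum_congr rfl fun m _ => ?_
          rw [habs m]
          simp only [inp, map_sum, map_mul, Complex.conj_conj, Finset.sum_mul_sum]
          refine Finset.sum_congr rfl fun x _ => Finset.sum_congr rfl fun y _ => by ring
      _ = ∑ x, ∑ y, ((starRingEnd ℂ) (ψ j x) * ψ j y)
            * (∑ m, ψ m x * (starRingEnd ℂ) (ψ m y)) := by
          rw [Finset.sum_comm]
          refine Finset.sum_congr rfl fun x _ => ?_
          rw [Finset.sum_comm]
          refine Finset.sum_congr rfl fun y _ => ?_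
          rw [Finset.mul_sum]
      _ = ∑ x, (starRingEnd ℂ) (ψ j x) * ψ j x * (d : ℂ) := by
          refine Finset.sum_congr rfl fun x _ => ?_
          rw [Finset.sum_eq_single x]
          · rw [hE x x]; simp
          · intro y _ hy; rw [hE x y, if_neg (Ne.symm hy), mul_zero]
          · simp
      _ = (d : ℂ) := by
          rw [← Finset.sum_mul]
          have : (∑ x, (starRingEnd ℂ) (ψ j x) * ψ j x) = 1 := hψ j
          rw [this, one_mul]
  have hsum : ∑ m, a m = (d : ℝ) := by
    have : ((∑ m, a m : ℝ) : ℂ) = (d : ℂ) := by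
      simp only [ha]
      push_cast
      exact hsumC
    exact_mod_cast this
  -- positivity of each term
  have hjj : a j = 1 := by simp [ha, hψ j]
  have hposall : ∀ m, 0 < a m := by
    intro m
    rcases lt_or_eq_of_le (sq_nonneg (‖inp (ψ j) (ψ m)‖)) with h | h
    · exact h
    · exfalso
      have hz : ∏ l, a l = 0 := Finset.prod_eq_zero (Finset.mem_univ m) h.symm
      rw [hprod j] at hz
      have : (0:ℝ) < (1 / ((d : ℝ) + 1)) ^ (d ^ 2 - 1) := by positivity
      linarith
  set t : Finset (Fin (d ^ 2)) := Finset.univ.erase j with ht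
  have hkt : k ∈ t := Finset.mem_erase.2 ⟨Ne.symm hjk, Finset.mem_univ k⟩
  have hcard : (t.card : ℝ) = (d : ℝ) ^ 2 - 1 := by
    rw [ht, Finset.card_erase_of_mem (Finset.mem_univ j)]
    simp only [Finset.card_univ, Fintype.card_fin]
    have h1 : 1 ≤ d ^ 2 := Nat.one_le_pow _ _ (by omega)
    push_cast [Nat.cast_sub h1]
    ring
  have hsumt : ∑ m ∈ t, a m = (d : ℝ) - 1 := by
    have := Finset.add_sum_erase Finset.univ a (Finset.mem_univ j)
    rw [hsum, hjj] at this
    rw [ht]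
    linarith
  have hprodt : ∏ m ∈ t, a m = (1 / ((d : ℝ) + 1)) ^ (d ^ 2 - 1) := by
    have := Finset.mul_prod_erase Finset.univ a (Finset.mem_univ j)
    rw [hprod j, hjj, one_mul] at this
    rw [ht, this]
  -- arithmetic facts
  have hdm : (1:ℝ) < d := by exact_mod_cast hd2
  have hn0 : (0:ℝ) < (t.card : ℝ) := by
    rw [hcard]; nlinarith
  have hmean : ((d:ℝ) - 1) / (t.card : ℝ) = 1 / ((d : ℝ) + 1) := by
    rw [hcard]
    have h1 : (d:ℝ) + 1 ≠ 0 := by nlinarith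
    have h2 : (d:ℝ) ^ 2 - 1 ≠ 0 := by nlinarith
    field_simp
    ring
  have hncard : (t.card : ℝ) = ((d ^ 2 - 1 : ℕ) : ℝ) := by
    rw [hcard]
    have h1 : 1 ≤ d ^ 2 := Nat.one_le_pow _ _ (by omega)
    push_cast [Nat.cast_sub h1]
    ring
  -- Jensen equality for log
  have hw : (∑ _m ∈ t, (t.card : ℝ)⁻¹) = 1 := by
    rw [Finset.sum_const, nsmul_eq_mul, mul_inv_cancel₀ (ne_of_gt hn0)]
  have hlhs : (∑ m ∈ t, (t.card : ℝ)⁻¹ • a m) = 1 / ((d : ℝ) + 1) := by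
    simp only [smul_eq_mul, ← Finset.mul_sum]
    rw [hsumt, ← hmean]
    ring
  have hrhs : (∑ m ∈ t, (t.card : ℝ)⁻¹ • Real.log (a m)) = Real.log (1 / ((d : ℝ) + 1)) := by
    simp only [smul_eq_mul, ← Finset.mul_sum]
    rw [← Real.log_prod (fun m _ => ne_of_gt (hposall m)), hprodt, Real.log_pow, hncard]
    rw [← mul_assoc, inv_mul_cancel₀ (by rw [← hncard]; exact ne_of_gt hn0), one_mul]
  have heq : Real.log (∑ m ∈ t, (t.card : ℝ)⁻¹ • a m)
      ≤ ∑ m ∈ t, (t.card : ℝ)⁻¹ • Real.log (a m) := by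
    rw [hlhs, hrhs]
  have hall := strictConcaveOn_log_Ioi.eq_of_map_sum_eq
    (t := t) (w := fun _ => (t.card : ℝ)⁻¹) (p := a)
    (fun m _ => inv_pos.2 hn0) hw (fun m _ => hposall m) heq
  -- all a m, m ∈ t, are equal; hence each equals the mean
  have hconst : ∀ m ∈ t, a m = a k := fun m hm => hall hm hkt
  have : ∑ m ∈ t, a m = t.card * a k := by
    rw [Finset.sum_congr rfl hconst, Finset.sum_const, nsmul_eq_mul]
  rw [hsumt] at this
  have : a k = ((d:ℝ) - 1) / (t.card : ℝ) := by
    field_simp at this ⊢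
    linarith
  rw [hmean] at this
  exact this
end

section
/- Let ψ₁, ψ₂, ψ₃, ψ₄ be four unit vectors in ℂ² forming a qubit SIC POVM, i.e., |⟨ψ_j, ψ_k⟩|² = 1/3 for all j ≠ k, and let A be the 4×4 Gram matrix with entries A_{jk} = ⟨ψ_j, ψ_k⟩. Then the permanent of A equals 8/3. -/
open scoped BigOperators

/-- The permanent of an `n × n` complex matrix:
`perm(A) = ∑_{σ ∈ S_n} ∏_j A_{j, σ(j)}`. -/
noncomputable def permanent {n : ℕ} (A : Matrix (Fin n) (Fin n) ℂ) : ℂ :=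
  ∑ σ : Equiv.Perm (Fin n), ∏ j, A j (σ j)

open scoped Matrix

def mkPerm4 (v w : Fin 4 → Fin 4) (h1 : ∀ x, w (v x) = x) (h2 : ∀ x, v (w x) = x) :
    Equiv.Perm (Fin 4) := ⟨v, w, h1, h2⟩

theorem permanent_expand (A : Matrix (Fin 4) (Fin 4) ℂ) :
    permanent A =
      A 0 0*A 1 1*A 2 2*A 3 3 +
        A 0 0*A 1 1*A 2 3*A 3 2 +
        A 0 0*A 1 2*A 2 1*A 3 3 +
        A 0 0*A 1 2*A 2 3*A 3 1 +
        A 0 0*A 1 3*A 2 1*A 3 2 +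
        A 0 0*A 1 3*A 2 2*A 3 1 +
        A 0 1*A 1 0*A 2 2*A 3 3 +
        A 0 1*A 1 0*A 2 3*A 3 2 +
        A 0 1*A 1 2*A 2 0*A 3 3 +
        A 0 1*A 1 2*A 2 3*A 3 0 +
        A 0 1*A 1 3*A 2 0*A 3 2 +
        A 0 1*A 1 3*A 2 2*A 3 0 +
        A 0 2*A 1 0*A 2 1*A 3 3 +
        A 0 2*A 1 0*A 2 3*A 3 1 +
        A 0 2*A 1 1*A 2 0*A 3 3 +
        A 0 2*A 1 1*A 2 3*A 3 0 +
        A 0 2*A 1 3*A 2 0*A 3 1 +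
        A 0 2*A 1 3*A 2 1*A 3 0 +
        A 0 3*A 1 0*A 2 1*A 3 2 +
        A 0 3*A 1 0*A 2 2*A 3 1 +
        A 0 3*A 1 1*A 2 0*A 3 2 +
        A 0 3*A 1 1*A 2 2*A 3 0 +
        A 0 3*A 1 2*A 2 0*A 3 1 +
        A 0 3*A 1 2*A 2 1*A 3 0 := by
  have hb : Function.Bijective
      (![mkPerm4 ![0,1,2,3] ![0,1,2,3] (by decide) (by decide),
       mkPerm4 ![0,1,3,2] ![0,1,3,2] (by decide) (by decide),
       mkPerm4 ![0,2,1,3] ![0,2,1,3] (by decide) (by decide),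
       mkPerm4 ![0,2,3,1] ![0,3,1,2] (by decide) (by decide),
       mkPerm4 ![0,3,1,2] ![0,2,3,1] (by decide) (by decide),
       mkPerm4 ![0,3,2,1] ![0,3,2,1] (by decide) (by decide),
       mkPerm4 ![1,0,2,3] ![1,0,2,3] (by decide) (by decide),
       mkPerm4 ![1,0,3,2] ![1,0,3,2] (by decide) (by decide),
       mkPerm4 ![1,2,0,3] ![2,0,1,3] (by decide) (by decide),
       mkPerm4 ![1,2,3,0] ![3,0,1,2] (by decide) (by decide),
       mkPerm4 ![1,3,0,2] ![2,0,3,1] (by decide) (by decide),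
       mkPerm4 ![1,3,2,0] ![3,0,2,1] (by decide) (by decide),
       mkPerm4 ![2,0,1,3] ![1,2,0,3] (by decide) (by decide),
       mkPerm4 ![2,0,3,1] ![1,3,0,2] (by decide) (by decide),
       mkPerm4 ![2,1,0,3] ![2,1,0,3] (by decide) (by decide),
       mkPerm4 ![2,1,3,0] ![3,1,0,2] (by decide) (by decide),
       mkPerm4 ![2,3,0,1] ![2,3,0,1] (by decide) (by decide),
       mkPerm4 ![2,3,1,0] ![3,2,0,1] (by decide) (by decide),
       mkPerm4 ![3,0,1,2] ![1,2,3,0] (by decide) (by decide),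
       mkPerm4 ![3,0,2,1] ![1,3,2,0] (by decide) (by decide),
       mkPerm4 ![3,1,0,2] ![2,1,3,0] (by decide) (by decide),
       mkPerm4 ![3,1,2,0] ![3,1,2,0] (by decide) (by decide),
       mkPerm4 ![3,2,0,1] ![2,3,1,0] (by decide) (by decide),
       mkPerm4 ![3,2,1,0] ![3,2,1,0] (by decide) (by decide)] : Fin 24 → Equiv.Perm (Fin 4)) := by decide
  rw [permanent, ← Fintype.sum_bijective _ hb _ _ (fun i => rfl)]
  simp [Fin.sum_univ_succ, Fin.prod_univ_four, mkPerm4]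
  ring

theorem stmt18 (ψ : Fin 4 → (Fin 2 → ℂ)) (hψ : ∀ j, inp (ψ j) (ψ j) = 1)
    (hSIC : ∀ j k, j ≠ k → ‖inp (ψ j) (ψ k)‖ ^ 2 = 1 / 3)
    (A : Matrix (Fin 4) (Fin 4) ℂ) (hA : ∀ j k, A j k = inp (ψ j) (ψ k)) :
    permanent A = 8 / 3 := by
  -- basic facts about the Gram matrix
  have hd : ∀ j, A j j = 1 := fun j => (hA j j).trans (hψ j)
  have hherm : ∀ j k, A k j = (starRingEnd ℂ) (A j k) := by
    intro j k
    rw [hA, hA, inp, inp, map_sum]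
    exact Finset.sum_congr rfl fun i _ => by
      simp only [map_mul, RingHomCompTriple.comp_apply, RingHom.id_apply,
        Complex.conj_conj]
      ring
  have hm : ∀ j k, j ≠ k → A j k * A k j = 1/3 := by
    intro j k h
    have h1 := hSIC j k h
    rw [Complex.sq_norm] at h1
    rw [hherm j k, Complex.mul_conj, hA j k, h1]
    norm_num
  -- the matrix `N` with rows `conj (ψ j)`, so that `A = N * Nᴴ`
  set N : Matrix (Fin 4) (Fin 2) ℂ :=
    Matrix.of fun j a => (starRingEnd ℂ) (ψ j a) with hN
  have hAN : ∀ j k, A j k = (N * Nᴴ) j k := by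
    intro j k
    rw [hA, inp, Matrix.mul_apply]
    exact Finset.sum_congr rfl fun a _ => by
      simp [hN, Matrix.conjTranspose_apply]
  -- frame operator facts
  have hsherm : ∀ a b, (Nᴴ * N) b a = (starRingEnd ℂ) ((Nᴴ * N) a b) := by
    intro a b
    rw [Matrix.mul_apply, Matrix.mul_apply, map_sum]
    refine Finset.sum_congr rfl fun k _ => ?_
    simp [Matrix.conjTranspose_apply]
    ring
  have htr : (Nᴴ * N) 0 0 + (Nᴴ * N) 1 1 = 4 := by
    rw [Matrix.mul_apply, Matrix.mul_apply, ← Finset.sum_add_distrib]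
    have h1 : ∀ k : Fin 4, Nᴴ 0 k * N k 0 + Nᴴ 1 k * N k 1 = 1 := by
      intro k
      have h2 := hψ k
      rw [inp, Fin.sum_univ_two] at h2
      simp only [Matrix.conjTranspose_apply, hN, Matrix.of_apply, starRingEnd_apply,
        star_star]
      rw [starRingEnd_apply, starRingEnd_apply] at h2
      rw [← h2]; ring
    rw [Finset.sum_congr rfl fun k _ => h1 k]
    simp
  have htr2 : (Nᴴ * N) 0 0 * (Nᴴ * N) 0 0 + (Nᴴ * N) 0 1 * (Nᴴ * N) 1 0
      + (Nᴴ * N) 1 0 * (Nᴴ * N) 0 1 + (Nᴴ * N) 1 1 * (Nᴴ * N) 1 1 = 8 := by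
    have e1 : Matrix.trace ((Nᴴ * N) * (Nᴴ * N)) = Matrix.trace ((N * Nᴴ) * (N * Nᴴ)) := by
      rw [Matrix.mul_assoc, Matrix.trace_mul_comm]
      simp only [Matrix.mul_assoc]
    have e2 : Matrix.trace ((Nᴴ * N) * (Nᴴ * N)) =
        (Nᴴ * N) 0 0 * (Nᴴ * N) 0 0 + (Nᴴ * N) 0 1 * (Nᴴ * N) 1 0
          + (Nᴴ * N) 1 0 * (Nᴴ * N) 0 1 + (Nᴴ * N) 1 1 * (Nᴴ * N) 1 1 := by
      simp [Matrix.trace, Matrix.diag, Matrix.mul_apply, Fin.sum_univ_two]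
      ring
    have e3 : Matrix.trace ((N * Nᴴ) * (N * Nᴴ)) = 8 := by
      have e4 : Matrix.trace ((N * Nᴴ) * (N * Nᴴ)) = ∑ j : Fin 4, ∑ k : Fin 4, A j k * A k j := by
        rw [Matrix.trace]
        refine Finset.sum_congr rfl fun j _ => ?_
        rw [Matrix.diag_apply, Matrix.mul_apply]
        exact Finset.sum_congr rfl fun k _ => by rw [hAN j k, hAN k j]
      rw [e4, Fin.sum_univ_four]
      rw [Fin.sum_univ_four, Fin.sum_univ_four, Fin.sum_univ_four, Fin.sum_univ_four]
      rw [hd 0, hd 1, hd 2, hd 3,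
        hm 0 1 (by decide), hm 0 2 (by decide), hm 0 3 (by decide),
        hm 1 0 (by decide), hm 1 2 (by decide), hm 1 3 (by decide),
        hm 2 0 (by decide), hm 2 1 (by decide), hm 2 3 (by decide),
        hm 3 0 (by decide), hm 3 1 (by decide), hm 3 2 (by decide)]
      norm_num
    rw [← e2, e1, e3]
  -- deduce that the frame operator is 2 • 1
  have hxim : ((Nᴴ * N) 0 0).im = 0 := by
    have h := congrArg Complex.im (hsherm 0 0)
    simp at h
    linarith
  have hyim : ((Nᴴ * N) 1 1).im = 0 := by
    have h := congrArg Complex.im (hsherm 1 1)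
    simp at h
    linarith
  have hre1 : ((Nᴴ * N) 0 0).re + ((Nᴴ * N) 1 1).re = 4 := by
    have h := congrArg Complex.re htr
    simpa using h
  rw [hsherm 0 1, Complex.mul_conj, mul_comm ((starRingEnd ℂ) ((Nᴴ * N) 0 1)) _,
    Complex.mul_conj] at htr2
  have hre2 : ((Nᴴ * N) 0 0).re * ((Nᴴ * N) 0 0).re
      + ((Nᴴ * N) 1 1).re * ((Nᴴ * N) 1 1).re
      + 2 * Complex.normSq ((Nᴴ * N) 0 1) = 8 := by
    have h := congrArg Complex.re htr2
    simp [Complex.add_re, Complex.mul_re, hxim, hyim] at h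
    linarith
  have hu : ((Nᴴ * N) 0 0).re = 2 := by
    nlinarith [Complex.normSq_nonneg ((Nᴴ * N) 0 1),
      sq_nonneg (((Nᴴ * N) 0 0).re - ((Nᴴ * N) 1 1).re)]
  have hv : ((Nᴴ * N) 1 1).re = 2 := by linarith
  have hp : Complex.normSq ((Nᴴ * N) 0 1) = 0 := by nlinarith
  have hz0 : (Nᴴ * N) 0 1 = 0 := Complex.normSq_eq_zero.mp hp
  have hw0 : (Nᴴ * N) 1 0 = 0 := by rw [hsherm 0 1, hz0]; simp
  have hx2 : (Nᴴ * N) 0 0 = 2 := by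
    apply Complex.ext <;> simp [hu, hxim]
  have hy2 : (Nᴴ * N) 1 1 = 2 := by
    apply Complex.ext <;> simp [hv, hyim]
  have hS : Nᴴ * N = (2 : ℂ) • (1 : Matrix (Fin 2) (Fin 2) ℂ) := by
    ext a b
    fin_cases a <;> fin_cases b <;>
      simp only [Matrix.smul_apply, Matrix.one_apply, Fin.isValue] <;>
      norm_num [hx2, hy2, hz0, hw0]
  have hAA : (N * Nᴴ) * (N * Nᴴ) = (2 : ℂ) • (N * Nᴴ) := by
    calc (N * Nᴴ) * (N * Nᴴ) = N * ((Nᴴ * N) * Nᴴ) := by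
          rw [Matrix.mul_assoc, Matrix.mul_assoc]
      _ = N * (((2 : ℂ) • (1 : Matrix (Fin 2) (Fin 2) ℂ)) * Nᴴ) := by rw [hS]
      _ = (2 : ℂ) • (N * Nᴴ) := by
          rw [Matrix.smul_mul, Matrix.one_mul, Matrix.mul_smul]
  have key : ∀ j l, A j 0 * A 0 l + A j 1 * A 1 l + A j 2 * A 2 l + A j 3 * A 3 l
      = 2 * A j l := by
    intro j l
    have h := congrFun (congrFun hAA j) l
    rw [Matrix.mul_apply, Fin.sum_univ_four, Matrix.smul_apply] at h
    rw [hAN j 0, hAN 0 l, hAN j 1, hAN 1 l, hAN j 2, hAN 2 l, hAN j 3, hAN 3 l, hAN j l]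
    simpa using h
  -- the six relations from the frame-operator identity
  have R01 : A 0 2 * A 2 1 + A 0 3 * A 3 1 = 0 := by
    have h := key 0 1; rw [hd 0, hd 1] at h; linear_combination h
  have R02 : A 0 1 * A 1 2 + A 0 3 * A 3 2 = 0 := by
    have h := key 0 2; rw [hd 0, hd 2] at h; linear_combination h
  have R03 : A 0 1 * A 1 3 + A 0 2 * A 2 3 = 0 := by
    have h := key 0 3; rw [hd 0, hd 3] at h; linear_combination h
  have R12 : A 1 0 * A 0 2 + A 1 3 * A 3 2 = 0 := by
    have h := key 1 2; rw [hd 1, hd 2] at h; linear_combination h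
  have R13 : A 1 0 * A 0 3 + A 1 2 * A 2 3 = 0 := by
    have h := key 1 3; rw [hd 1, hd 3] at h; linear_combination h
  -- overlaps
  have P01 := hm 0 1 (by decide)
  have P02 := hm 0 2 (by decide)
  have P03 := hm 0 3 (by decide)
  have P12 := hm 1 2 (by decide)
  have P13 := hm 1 3 (by decide)
  have P23 := hm 2 3 (by decide)
  -- expand the permanent and conclude
  rw [permanent_expand A, hd 0, hd 1, hd 2, hd 3]
  linear_combination (P01 + P02 + P03 + P12 + P13 + P23)
    + (A 2 3 * A 3 2) * P01 + (1/3) * P23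
    + (A 1 3 * A 3 1) * P02 + (1/3) * P13
    + (A 1 2 * A 2 1) * P03 + (1/3) * P12
    + A 2 0 * R02 + A 3 0 * R03 + A 1 0 * R01
    + (A 3 1 * R13 + A 2 1 * R12 - A 1 0 * R01)
    + (A 2 3 * A 3 0) * R02 - (A 2 3 * A 3 2) * P03 - (1/3) * P23
    + (A 3 2 * A 2 0) * R03 - (A 2 3 * A 3 2) * P02 - (1/3) * P23
    + (A 1 3 * A 3 0) * R01 - (A 1 3 * A 3 1) * P03 - (1/3) * P13
    + (A 3 1 * A 1 0) * R03 - (A 1 3 * A 3 1) * P01 - (1/3) * P13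
    + (A 1 2 * A 2 0) * R01 - (A 1 2 * A 2 1) * P02 - (1/3) * P12
    + (A 2 1 * A 1 0) * R02 - (A 1 2 * A 2 1) * P01 - (1/3) * P12
end

section
/- Let d ≥ 1 and let ψ₁, …, ψ_{d²} be d² unit vectors in ℂ^d forming a SIC POVM, i.e., |⟨ψ_j, ψ_k⟩|² = 1/(d+1) for all j ≠ k. If ρ is a Hermitian d×d complex matrix satisfying ψ_j† ρ ψ_j = 1/d for all j = 1, …, d², then ρ = I/d. In particular, the completely mixed state is the only quantum state whose SIC POVM outcome probabilities are all equal to 1/d. -/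
open scoped BigOperators
open Matrix

lemma inp_conj {d : ℕ} (φ ψ : Fin d → ℂ) : inp φ ψ = (starRingEnd ℂ) (inp ψ φ) := by
  simp [inp, map_sum, mul_comm]

lemma frob_zero {n : ℕ} (A : Matrix (Fin n) (Fin n) ℂ) (h : Matrix.trace (Aᴴ * A) = 0) :
    A = 0 := by
  have h2 : ∑ i : Fin n, ∑ j : Fin n, Complex.normSq (A j i) = 0 := by
    have := congrArg Complex.re h
    simpa [Matrix.trace, Matrix.mul_apply, Matrix.conjTranspose_apply, Matrix.diag,
      Complex.normSq_eq_conj_mul_self, Complex.re_sum, Complex.normSq_apply] using this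
  ext i j
  have hij : Complex.normSq (A i j) = 0 := by
    have hnn : ∀ i ∈ Finset.univ, (0:ℝ) ≤ ∑ j : Fin n, Complex.normSq (A j i) :=
      fun i _ => Finset.sum_nonneg fun j _ => Complex.normSq_nonneg _
    have h3 := (Finset.sum_eq_zero_iff_of_nonneg hnn).1 h2 j (Finset.mem_univ _)
    exact (Finset.sum_eq_zero_iff_of_nonneg (fun i _ => Complex.normSq_nonneg _)).1 h3 i
      (Finset.mem_univ _)
  simpa using Complex.normSq_eq_zero.1 hij

lemma trace_mul_vecMulVec {n : ℕ} (A : Matrix (Fin n) (Fin n) ℂ) (v : Fin n → ℂ) :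
    Matrix.trace (A * Matrix.vecMulVec v (star v)) =
      dotProduct (star v) (A.mulVec v) := by
  simp only [Matrix.trace, Matrix.diag, Matrix.mul_apply, Matrix.vecMulVec_apply,
    dotProduct, Matrix.mulVec, Pi.star_apply, Complex.star_def]
  apply Finset.sum_congr rfl; intro i _
  rw [Finset.mul_sum]
  apply Finset.sum_congr rfl; intro j _
  ring

theorem stmt19 (d : ℕ) (hd : 1 ≤ d)
    (ψ : Fin (d ^ 2) → (Fin d → ℂ)) (hψ : ∀ j, inp (ψ j) (ψ j) = 1)
    (hSIC : ∀ j k, j ≠ k →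
      ‖inp (ψ j) (ψ k)‖ ^ 2 = 1 / (d + 1))
    (ρ : Matrix (Fin d) (Fin d) ℂ) (hρ : ρ.IsHermitian)
    (hprob : ∀ j, dotProduct (star (ψ j)) (ρ.mulVec (ψ j)) = 1 / d) :
    ρ = ((d : ℂ))⁻¹ • (1 : Matrix (Fin d) (Fin d) ℂ) := by
  have hdC : (d : ℂ) ≠ 0 := Nat.cast_ne_zero.2 (by omega)
  have hd1C : ((d : ℂ) + 1) ≠ 0 := by
    intro h
    have : ((d : ℂ) + 1) = ((d + 1 : ℕ) : ℂ) := by push_cast; ring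
    rw [this] at h
    exact (Nat.cast_ne_zero.2 (Nat.succ_ne_zero d)) h
  set P : Fin (d ^ 2) → Matrix (Fin d) (Fin d) ℂ :=
    fun j => Matrix.vecMulVec (ψ j) (star (ψ j)) with hP
  have hquad : ∀ (A : Matrix (Fin d) (Fin d) ℂ) j,
      Matrix.trace (A * P j) = dotProduct (star (ψ j)) (A.mulVec (ψ j)) :=
    fun A j => trace_mul_vecMulVec A (ψ j)
  have hPform : ∀ j k, dotProduct (star (ψ k)) ((P j).mulVec (ψ k)) =
      inp (ψ k) (ψ j) * inp (ψ j) (ψ k) := by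
    intro j k
    simp only [hP, dotProduct, Matrix.mulVec, Matrix.vecMulVec_apply, Pi.star_apply,
      inp, dotProduct, Complex.star_def]
    rw [Finset.sum_mul]
    apply Finset.sum_congr rfl; intro i _
    rw [Finset.mul_sum, Finset.mul_sum]
    apply Finset.sum_congr rfl; intro l _
    ring
  have hGram : ∀ j k, Matrix.trace (P k * P j) =
      if j = k then 1 else (1 / ((d : ℂ) + 1)) := by
    intro j k
    rw [hquad, hPform]
    by_cases h : j = k
    · subst h; simp [hψ j]
    · have habs := hSIC j k h
      rw [Complex.sq_norm] at habs
      rw [if_neg h, inp_conj (ψ k) (ψ j)]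
      rw [Complex.mul_conj, habs]
      push_cast; ring
  -- linear independence of P
  have hLI : LinearIndependent ℂ P := by
    rw [Fintype.linearIndependent_iff]
    intro c hc
    have key : ∀ k, (∑ j, c j) / ((d : ℂ) + 1) + c k * ((d : ℂ) / ((d : ℂ) + 1)) = 0 := by
      intro k
      have h1 : Matrix.trace (P k * ∑ j, c j • P j) = 0 := by rw [hc]; simp
      have h2 : Matrix.trace (P k * ∑ j, c j • P j) =
          ∑ j, c j * (if j = k then 1 else (1 / ((d : ℂ) + 1))) := by
        rw [Finset.mul_sum, Matrix.trace_sum]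
        exact Finset.sum_congr rfl fun j _ => by
          rw [Matrix.mul_smul, Matrix.trace_smul, hGram j k, smul_eq_mul]
      rw [h2] at h1
      have h3 : ∀ j, c j * (if j = k then 1 else (1 / ((d : ℂ) + 1))) =
          c j * (1 / ((d : ℂ) + 1)) + (if j = k then c j * ((d : ℂ) / ((d : ℂ) + 1)) else 0) := by
        intro j
        by_cases hjk : j = k
        · rw [if_pos hjk, if_pos hjk]
          field_simp
          ring
        · rw [if_neg hjk, if_neg hjk, add_zero]
      rw [Finset.sum_congr rfl fun j _ => h3 j, Finset.sum_add_distrib,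
        Finset.sum_ite_eq' Finset.univ k (fun j => c j * ((d : ℂ) / ((d : ℂ) + 1)))] at h1
      simp only [Finset.mem_univ, if_true] at h1
      rw [← Finset.sum_mul] at h1
      linear_combination h1
    have hck : ∀ k, (d : ℂ) * c k = -(∑ j, c j) := by
      intro k
      have hk := key k
      field_simp at hk
      linear_combination hk
    have hS : (∑ j, c j) = 0 := by
      have hsum : (d : ℂ) * (∑ k, c k) = (d ^ 2 : ℕ) * (-(∑ j, c j)) := by
        rw [Finset.mul_sum, Finset.sum_congr rfl fun k _ => hck k, Finset.sum_const,
          Finset.card_univ, Fintype.card_fin, nsmul_eq_mul]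
      have hfac : (d : ℂ) * ((d : ℂ) + 1) * (∑ j, c j) = 0 := by
        push_cast at hsum
        linear_combination hsum
      rcases mul_eq_zero.1 hfac with h | h
      · exact absurd h (mul_ne_zero hdC hd1C)
      · exact h
    intro k
    have := hck k
    rw [hS, neg_zero] at this
    exact (mul_eq_zero.1 this).resolve_left hdC
  -- basis
  have hcard : Fintype.card (Fin (d ^ 2)) =
      Module.finrank ℂ (Matrix (Fin d) (Fin d) ℂ) := by
    rw [Fintype.card_fin, Module.finrank_matrix, Module.finrank_self, Fintype.card_fin]
    ring
  haveI : Nonempty (Fin (d ^ 2)) := ⟨⟨0, pow_pos (by omega) 2⟩⟩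
  let b := basisOfLinearIndependentOfCardEqFinrank hLI hcard
  have hb : ⇑b = P := coe_basisOfLinearIndependentOfCardEqFinrank hLI hcard
  -- the difference matrix
  set σ : Matrix (Fin d) (Fin d) ℂ := ρ - ((d : ℂ))⁻¹ • 1 with hσdef
  have hσH : σᴴ = σ := by
    have h1 : (((d : ℂ))⁻¹ • (1 : Matrix (Fin d) (Fin d) ℂ))ᴴ =
        ((d : ℂ))⁻¹ • (1 : Matrix (Fin d) (Fin d) ℂ) := by
      rw [Matrix.conjTranspose_smul, Matrix.conjTranspose_one]
      congr 1
      simp [Complex.conj_natCast]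
    rw [hσdef, Matrix.conjTranspose_sub, hρ.eq, h1]
  have hσquad : ∀ j, dotProduct (star (ψ j)) (σ.mulVec (ψ j)) = 0 := by
    intro j
    rw [hσdef, Matrix.sub_mulVec, dotProduct_sub, hprob j,
      Matrix.smul_mulVec, Matrix.one_mulVec, dotProduct_smul]
    have hinp : dotProduct (star (ψ j)) (ψ j) = 1 := by
      rw [← hψ j]; simp [inp, dotProduct]
    rw [hinp, smul_eq_mul, mul_one]
    simp
  have htr : Matrix.trace (σᴴ * σ) = 0 := by
    rw [hσH]
    have hrepr : σ = ∑ j, b.repr σ j • P j := by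
      conv_lhs => rw [← b.sum_repr σ]
      exact Finset.sum_congr rfl fun j _ => by rw [hb]
    calc Matrix.trace (σ * σ) = Matrix.trace (σ * ∑ j, b.repr σ j • P j) := by
          conv_lhs => rw [hrepr]
          rw [← hrepr]
      _ = ∑ j, b.repr σ j * Matrix.trace (σ * P j) := by
          rw [Finset.mul_sum, Matrix.trace_sum]
          exact Finset.sum_congr rfl fun j _ => by
            rw [Matrix.mul_smul, Matrix.trace_smul, smul_eq_mul]
      _ = 0 := by
          apply Finset.sum_eq_zero
          intro j _
          rw [hquad σ j, hσquad j, mul_zero]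
  have hσ0 : σ = 0 := frob_zero σ htr
  have := sub_eq_zero.1 hσ0
  exact this
end
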